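/- Fix δt > 0 and a face σ with dual-cell volume |D_σ| > 0, densities ρ^{n−1} > 0 and ρ^n > 0, velocity values u^n, ũ, u^{n+1} ∈ ℝ (previous, predicted and corrected velocities), pressure-gradient values g^n, g^{n+1} ∈ ℝ, and the scaled gradient g̃ = (ρ^n/ρ^{n−1})^{1/2} g^n. Let Ẽ be a finite set of dual faces; each ε ∈ Ẽ carries a mass flux F_ε ∈ ℝ and a neighbour predicted velocity ũ'_ε ∈ ℝ, and set the centered face value ũ_ε = (ũ + ũ'_ε)/2. Assume: (dual mass balance) (|D_σ|/δt)(ρ^n − ρ^{n−1}) + Σ_{ε∈Ẽ} F_ε = 0; (prediction step) (|D_σ|/δt)(ρ^n ũ − ρ^{n−1} u^n) + Σ_{ε∈Ẽ} F_ε ũ_ε + |D_σ| g̃ = 0; (correction step) (1/δt) ρ^n (u^{n+1} − ũ) + g^{n+1} − g̃ = 0. Then the discrete kinetic energy balance holds: (|D_σ|/δt)(e_k^{n+1} − e_k^n) + Σ_{ε∈Ẽ} F_ε e_{k,ε} + |D_σ| g^{n+1} u^{n+1} = −R, where e_k^{n+1} = (1/2) ρ^n (u^{n+1})² + (δt²/(2ρ^n))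 (g^{n+1})², e_k^n = (1/2) ρ^{n−1} (u^n)² + (δt²/(2ρ^{n−1})) (g^n)², e_{k,ε} = (1/2) ũ ũ'_ε, and R = (|D_σ| ρ^{n−1}/(2δt)) (ũ − u^n)². -/

import Mathlib

/-- at a single velocity degree of freedom of the staggered
pressure-correction scheme (dual mass balance, prediction step with scaled pressure
gradient `g̃ = (ρⁿ/ρⁿ⁻¹)^{1/2} gⁿ` and centered convection face values, correction
step), the discrete kinetic energy balance holds with numerical dissipation
`R = (|D_σ| ρⁿ⁻¹/(2δt)) (ũ - uⁿ)²`. -/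
theorem discrete_kinetic_energy_balance {D : Type*}
    (δt Dvol ρnm1 ρn : ℝ) (hδt : 0 < δt) (hDvol : 0 < Dvol)
    (hρnm1 : 0 < ρnm1) (hρn : 0 < ρn)
    (un ut un1 gn gn1 : ℝ)
    (Ed : Finset D) (Fε : D → ℝ) (utn : D → ℝ)
    (hdualmass : (Dvol / δt) * (ρn - ρnm1) + ∑ ε ∈ Ed, Fε ε = 0)
    (hpred : (Dvol / δt) * (ρn * ut - ρnm1 * un)
        + ∑ ε ∈ Ed, Fε ε * ((ut + utn ε) / 2)
        + Dvol * (Real.sqrt (ρn / ρnm1) * gn) = 0)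
    (hcorr : (1 / δt) * ρn * (un1 - ut) + gn1 - Real.sqrt (ρn / ρnm1) * gn = 0) :
    (Dvol / δt) *
        (((1/2) * ρn * un1 ^ 2 + (δt ^ 2 / (2 * ρn)) * gn1 ^ 2)
          - ((1/2) * ρnm1 * un ^ 2 + (δt ^ 2 / (2 * ρnm1)) * gn ^ 2))
      + ∑ ε ∈ Ed, Fε ε * ((1/2) * ut * utn ε)
      + Dvol * gn1 * un1
      = -((Dvol * ρnm1 / (2 * δt)) * (ut - un) ^ 2) := by
  set s : ℝ := Real.sqrt (ρn / ρnm1) with hs_def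
  have hs : s ^ 2 * ρnm1 = ρn := by
    have h1 : s ^ 2 = ρn / ρnm1 := Real.sq_sqrt (by positivity)
    rw [h1]; field_simp
  set A : ℝ := ∑ ε ∈ Ed, Fε ε with hA_def
  set B : ℝ := ∑ ε ∈ Ed, Fε ε * utn ε with hB_def
  have e1 : ∑ ε ∈ Ed, Fε ε * ((ut + utn ε) / 2) = (ut / 2) * A + (1 / 2) * B := by
    rw [hA_def, hB_def, Finset.mul_sum, Finset.mul_sum, ← Finset.sum_add_distrib]
    exact Finset.sum_congr rfl fun ε _ => by ring
  have e2 : ∑ ε ∈ Ed, Fε ε * ((1/2) * ut * utn ε) = (ut / 2) * B := by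
    rw [hB_def, Finset.mul_sum]
    exact Finset.sum_congr rfl fun ε _ => by ring
  rw [e1] at hpred
  rw [e2]
  -- cleared (denominator-free) versions of the hypotheses
  have hδt' : δt ≠ 0 := ne_of_gt hδt
  have hk : Dvol / δt * δt = Dvol := div_mul_cancel₀ Dvol hδt'
  have hk2 : 1 / δt * δt = 1 := by field_simp
  have H1 : Dvol * (ρn - ρnm1) + δt * A = 0 := by
    linear_combination δt * hdualmass - (ρn - ρnm1) * hk
  have H2 : Dvol * (ρn * ut - ρnm1 * un) + δt * ((ut / 2) * A + (1 / 2) * B)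
      + δt * (Dvol * (s * gn)) = 0 := by
    linear_combination δt * hpred - (ρn * ut - ρnm1 * un) * hk
  have H3 : ρn * (un1 - ut) + δt * gn1 - δt * (s * gn) = 0 := by
    linear_combination δt * hcorr - (ρn * (un1 - ut)) * hk2
  -- denominator-cleared kinetic energy identity
  have key : Dvol * (ρnm1 * ρn ^ 2 * un1 ^ 2 + ρnm1 * δt ^ 2 * gn1 ^ 2
        - ρn * ρnm1 ^ 2 * un ^ 2 - ρn * δt ^ 2 * gn ^ 2)
      + δt * ρn * ρnm1 * ut * B + 2 * δt * ρn * ρnm1 * Dvol * gn1 * un1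
      + Dvol * ρn * ρnm1 ^ 2 * (ut - un) ^ 2 = 0 := by
    linear_combination (2 * ρnm1 * ρn * ut) * H2 - (ρnm1 * ρn * ut ^ 2) * H1
      + (Dvol * δt ^ 2 * gn ^ 2) * hs
      + (Dvol * ρnm1 * δt * (gn1 + s * gn) + 2 * Dvol * ρnm1 * ρn * ut
          + Dvol * ρnm1 * ρn * (un1 - ut)) * H3
  have hρn' : ρn ≠ 0 := ne_of_gt hρn
  have hρnm1' : ρnm1 ≠ 0 := ne_of_gt hρnm1
  field_simp
  linear_combination key
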